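/- Let a > 0 and let X : ℝ → ℝ be a C² vector field on [0,a] with X(0) = X(a) = 0, and set C₁ := sup_{x∈[0,a]} |X'(x)| and C₂ := sup_{x∈[0,a]} |X''(x)|, with C₁ > 0. Let (t,x) ↦ f^t(x) be a flow of X on [0,a], i.e. f⁰ = id, each f^t maps [0,a] to [0,a], for every x ∈ [0,a] the map t ↦ f^t(x) has derivative X(f^t(x)), and each f^t is twice differentiable in x with positive first derivative Df^t. Then for every t ≥ 0 the function x ↦ log Df^t(x) is Lipschitz on [0,a] with Lipschitz constant (C₂/C₁)(e^{C₁ t} − 1); equivalently, |D log Df^t(x)| ≤ (C₂/C₁)(e^{C₁ t} − 1) for all x ∈ [0,a]. -/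

import Mathlib

open Set Real intervalIntegral Topology Filter

lemma pt_lip {f f' : ℝ → ℝ} {s : Set ℝ} (hs : Convex ℝ s)
    (hf : ∀ z ∈ s, HasDerivAt f (f' z) z) {C : ℝ} (hC : ∀ z ∈ s, |f' z| ≤ C) :
    ∀ u ∈ s, ∀ v ∈ s, |f v - f u| ≤ C * |v - u| := by
  intro u hu v hv
  have := Convex.norm_image_sub_le_of_norm_hasDerivWithin_le
    (f := f) (f' := f') (C := C) (fun z hz => (hf z hz).hasDerivWithinAt) (by simpa using hC) hs hu hv
  simpa [Real.norm_eq_abs] using this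

lemma pt_taylor {f f' : ℝ → ℝ} {s : Set ℝ} (hs : Convex ℝ s)
    (hf : ∀ z ∈ s, HasDerivAt f (f' z) z) {C : ℝ} (hCnn : 0 ≤ C)
    (hC : ∀ u ∈ s, ∀ v ∈ s, |f' v - f' u| ≤ C * |v - u|) :
    ∀ u ∈ s, ∀ v ∈ s, |f v - f u - f' u * (v - u)| ≤ C * |v - u| ^ 2 := by
  intro u hu v hv
  set g : ℝ → ℝ := fun z => f z - f' u * z with hg
  have huvs : Set.uIcc u v ⊆ s := by
    rcases le_total u v with h | h
    · rw [Set.uIcc_of_le h]; exact hs.ordConnected.out hu hv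
    · rw [Set.uIcc_of_ge h]; exact hs.ordConnected.out hv hu
  have hgd : ∀ z ∈ Set.uIcc u v, HasDerivAt g (f' z - f' u) z := fun z hz =>
    (hf z (huvs hz)).sub (by simpa using (hasDerivAt_id z).const_mul (f' u))
  have hbound : ∀ z ∈ Set.uIcc u v, |f' z - f' u| ≤ C * |v - u| := by
    intro z hz
    refine (hC u hu z (huvs hz)).trans ?_
    have : |z - u| ≤ |v - u| := by
      rw [Set.mem_uIcc] at hz
      rcases hz with ⟨h1,h2⟩|⟨h1,h2⟩ <;> rw [abs_sub_le_iff] <;>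
        constructor <;> nlinarith [le_abs_self (v-u), neg_abs_le (v-u)]
    nlinarith
  have := pt_lip (convex_uIcc u v) hgd hbound u Set.left_mem_uIcc v Set.right_mem_uIcc
  have h2 : g v - g u = f v - f u - f' u * (v - u) := by simp only [hg]; ring
  rw [h2] at this
  calc |f v - f u - f' u * (v - u)| ≤ C * |v - u| * |v - u| := this
    _ = C * |v - u| ^ 2 := by ring



/-- **Pixton–Tsuboi estimate (Lemma 2 of the paper).**
Let `X` be a `C²` vector field on `[0,a]` vanishing at the endpoints, with
`C₁ = sup |X'|`, `C₂ = sup |X''|` on `[0,a]`, `C₁ > 0`.  If `F` is a flow of `X`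
on `[0,a]`, with spatial derivative `DF` (positive) and second spatial derivative `D2F`,
then for `t ≥ 0` the map `x ↦ log DF t x` is Lipschitz on `[0,a]` with constant
`(C₂/C₁) (e^{C₁ t} - 1)`. -/
theorem pixton_tsuboi_estimate
    (a : ℝ) (ha : 0 < a)
    (X : ℝ → ℝ) (hX : ContDiff ℝ 2 X)
    (hX0 : X 0 = 0) (hXa : X a = 0)
    (C₁ C₂ : ℝ)
    (hC₁ : C₁ = sSup ((fun x => |deriv X x|) '' Set.Icc 0 a))
    (hC₂ : C₂ = sSup ((fun x => |deriv (deriv X) x|) '' Set.Icc 0 a))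
    (hC₁pos : 0 < C₁)
    (F DF D2F : ℝ → ℝ → ℝ)
    (hF0 : ∀ x : ℝ, F 0 x = x)
    (hFmaps : ∀ t : ℝ, ∀ x ∈ Set.Icc 0 a, F t x ∈ Set.Icc 0 a)
    (hFt : ∀ x ∈ Set.Icc 0 a, ∀ t : ℝ, HasDerivAt (fun s => F s x) (X (F t x)) t)
    (hDF : ∀ t : ℝ, ∀ x ∈ Set.Icc 0 a, HasDerivAt (fun y => F t y) (DF t x) x)
    (hDFpos : ∀ t : ℝ, ∀ x ∈ Set.Icc 0 a, 0 < DF t x)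
    (hD2F : ∀ t : ℝ, ∀ x ∈ Set.Icc 0 a, HasDerivAt (fun y => DF t y) (D2F t x) x) :
    ∀ t : ℝ, 0 ≤ t → ∀ x ∈ Set.Icc 0 a, ∀ y ∈ Set.Icc 0 a,
      |Real.log (DF t y) - Real.log (DF t x)| ≤
        C₂ / C₁ * (Real.exp (C₁ * t) - 1) * |y - x| := by
  have hXd : Differentiable ℝ X := hX.differentiable two_ne_zero
  have hX' : ContDiff ℝ 1 (deriv X) := by
    have h2 : ContDiff ℝ ((1:ℕ) + 1 : ℕ) X := by exact_mod_cast hX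
    exact ((contDiff_succ_iff_deriv).mp (by exact_mod_cast h2)).2.2
  have hX'c : Continuous (deriv X) := hX.continuous_deriv one_le_two
  have hX'd : Differentiable ℝ (deriv X) := hX'.differentiable one_ne_zero
  have hX''c : Continuous (deriv (deriv X)) := hX'.continuous_deriv le_rfl
  -- sup bounds
  have hC1b : ∀ u ∈ Set.Icc 0 a, |deriv X u| ≤ C₁ := by
    intro u hu
    rw [hC₁]
    exact le_csSup ((isCompact_Icc.image (continuous_abs.comp hX'c)).bddAbove)
      (Set.mem_image_of_mem _ hu)
  have hC2b : ∀ u ∈ Set.Icc 0 a, |deriv (deriv X) u| ≤ C₂ := by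
    intro u hu
    rw [hC₂]
    exact le_csSup ((isCompact_Icc.image (continuous_abs.comp hX''c)).bddAbove)
      (Set.mem_image_of_mem _ hu)
  have hC2nn : 0 ≤ C₂ := le_trans (abs_nonneg _) (hC2b 0 ⟨le_rfl, ha.le⟩)
  -- Lipschitz estimates on [0,a]
  have lipX : ∀ u ∈ Set.Icc 0 a, ∀ v ∈ Set.Icc 0 a, |X v - X u| ≤ C₁ * |v - u| :=
    pt_lip (convex_Icc 0 a) (fun z _ => (hXd z).hasDerivAt) hC1b
  have lipX' : ∀ u ∈ Set.Icc 0 a, ∀ v ∈ Set.Icc 0 a,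
      |deriv X v - deriv X u| ≤ C₂ * |v - u| :=
    pt_lip (convex_Icc 0 a) (fun z _ => (hX'd z).hasDerivAt) hC2b
  have taylorX : ∀ u ∈ Set.Icc 0 a, ∀ v ∈ Set.Icc 0 a,
      |X v - X u - deriv X u * (v - u)| ≤ C₂ * |v - u| ^ 2 :=
    pt_taylor (convex_Icc 0 a) (fun z _ => (hXd z).hasDerivAt) hC2nn lipX'
  -- Gronwall step A
  have hA : ∀ t : ℝ, 0 ≤ t → ∀ x ∈ Set.Icc 0 a, ∀ y ∈ Set.Icc 0 a,
      |F t y - F t x| ≤ |y - x| * Real.exp (C₁ * t) := by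
    intro t ht x hx y hy
    have key := norm_le_gronwallBound_of_norm_deriv_right_le
      (f := fun s => F s y - F s x) (f' := fun s => X (F s y) - X (F s x))
      (δ := |y - x|) (K := C₁) (ε := 0) (a := 0) (b := t)
      (ContinuousOn.sub
        (fun s _ => ((hFt y hy s).continuousAt).continuousWithinAt)
        (fun s _ => ((hFt x hx s).continuousAt).continuousWithinAt))
      (fun s _ => ((hFt y hy s).sub (hFt x hx s)).hasDerivWithinAt)
      (by simp [hF0])
      (fun s _ => by
        simpa [Real.norm_eq_abs, abs_sub_comm (F s y)] using
          lipX (F s x) (hFmaps s x hx) (F s y) (hFmaps s y hy))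
    have := key t ⟨ht, le_rfl⟩
    simpa [Real.norm_eq_abs, gronwallBound_ε0] using this

  -- key identity
  have hkey : ∀ x ∈ Set.Icc 0 a, ∀ t : ℝ, 0 ≤ t →
      DF t x = Real.exp (∫ s in (0:ℝ)..t, deriv X (F s x)) := by
    intro x hx t ht
    have hFcd : Differentiable ℝ fun s => F s x := fun s => (hFt x hx s).differentiableAt
    have hFc : Continuous fun s => F s x := hFcd.continuous
    set φ : ℝ → ℝ := fun s => deriv X (F s x) with hφdef
    have hφc : Continuous φ := hX'c.comp hFc
    set L : ℝ → ℝ := fun r => ∫ s in (0:ℝ)..r, φ s with hLdef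
    have hLd : ∀ r, HasDerivAt L (φ r) r := fun r =>
      intervalIntegral.integral_hasDerivAt_right (hφc.intervalIntegrable 0 r)
        (hφc.stronglyMeasurableAtFilter _ _) hφc.continuousAt
    set ψ : ℝ → ℝ := fun r => Real.exp (L r) with hψdef
    have hψd : ∀ r, HasDerivAt ψ (φ r * ψ r) r := fun r => by
      simpa [hψdef, mul_comm] using (hLd r).exp
    have hψ0 : ψ 0 = 1 := by simp [hψdef, hLdef]
    set M : ℝ := C₂ * (Real.exp (C₁*t))^2 / C₁ * (Real.exp (C₁*t) - 1) with hMdef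
    have hclose : ∀ y ∈ Set.Icc 0 a,
        |(F t y - F t x) - (y - x) * ψ t| ≤ M * |y - x|^2 := by
      intro y hy
      set ε : ℝ := C₂ * (Real.exp (C₁*t))^2 * |y - x|^2 with hεdef
      have key := norm_le_gronwallBound_of_norm_deriv_right_le
        (f := fun s => F s y - F s x - (y - x) * ψ s)
        (f' := fun s => X (F s y) - X (F s x) - (y - x) * (φ s * ψ s))
        (δ := 0) (K := C₁) (ε := ε) (a := 0) (b := t)
        (Continuous.continuousOn (by
          have h1 : Differentiable ℝ fun s => F s y := fun s => (hFt y hy s).differentiableAt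
          have h2 : Differentiable ℝ L := fun r => (hLd r).differentiableAt
          exact (h1.continuous.sub hFc).sub
            (continuous_const.mul (Real.continuous_exp.comp h2.continuous))))
        (fun s _ => (((hFt y hy s).sub (hFt x hx s)).sub
          ((hψd s).const_mul (y - x))).hasDerivWithinAt)
        (by simp [hF0, hψ0])
        ?_
      · have := key t ⟨ht, le_rfl⟩
        rw [gronwallBound_of_K_ne_0 (ne_of_gt hC₁pos)] at this
        simp only [Real.norm_eq_abs, sub_zero, zero_mul, zero_add] at this
        calc |F t y - F t x - (y - x) * ψ t| ≤ ε / C₁ * (Real.exp (C₁ * t) - 1) := this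
          _ = M * |y - x|^2 := by rw [hεdef, hMdef]; ring
      · intro s hs
        have hsmem : (0:ℝ) ≤ s := hs.1
        have hst : s ≤ t := hs.2.le
        have hu : F s x ∈ Set.Icc 0 a := hFmaps s x hx
        have hv : F s y ∈ Set.Icc 0 a := hFmaps s y hy
        have hR := taylorX (F s x) hu (F s y) hv
        have hAs := hA s hsmem x hx y hy
        have hexp : Real.exp (C₁ * s) ≤ Real.exp (C₁ * t) :=
          Real.exp_le_exp.mpr (by nlinarith)
        have hvu : |F s y - F s x| ≤ |y - x| * Real.exp (C₁ * t) := by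
          refine hAs.trans ?_
          have := abs_nonneg (y - x)
          nlinarith
        have hid : X (F s y) - X (F s x) - (y - x) * (φ s * ψ s) =
            (X (F s y) - X (F s x) - deriv X (F s x) * (F s y - F s x))
              + deriv X (F s x) * (F s y - F s x - (y - x) * ψ s) := by
          rw [hφdef]; ring
        simp only [Real.norm_eq_abs]
        rw [hid]
        refine (abs_add_le _ _).trans ?_
        have h1 : |X (F s y) - X (F s x) - deriv X (F s x) * (F s y - F s x)| ≤ ε := by
          refine hR.trans ?_
          rw [hεdef]
          have h2 : |F s y - F s x|^2 ≤ (|y - x| * Real.exp (C₁*t))^2 := by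
            have := abs_nonneg (F s y - F s x); nlinarith
          have := sq_abs (y - x)
          nlinarith [abs_nonneg (y-x), Real.exp_pos (C₁*t)]
        have h2 : |deriv X (F s x) * (F s y - F s x - (y - x) * ψ s)| ≤
            C₁ * |F s y - F s x - (y - x) * ψ s| := by
          rw [abs_mul]
          exact mul_le_mul_of_nonneg_right (hC1b _ hu) (abs_nonneg _)
        linarith
    -- limit of slopes
    have hne : (𝓝[Set.Icc 0 a \ {x}] x).NeBot := by
      rcases eq_or_lt_of_le hx.2 with hxa | hxa
      · subst hxa
        exact (right_nhdsWithin_Ioo_neBot ha).mono (nhdsWithin_mono _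
          (fun z hz => ⟨⟨hz.1.le, hz.2.le⟩, ne_of_lt hz.2⟩))
      · refine (left_nhdsWithin_Ioo_neBot hxa).mono (nhdsWithin_mono _ ?_)
        intro z hz
        exact ⟨⟨hx.1.trans hz.1.le, hz.2.le⟩, (ne_of_gt hz.1)⟩
    have hslope1 : Filter.Tendsto (slope (F t) x) (𝓝[Set.Icc 0 a \ {x}] x) (𝓝 (DF t x)) :=
      hasDerivWithinAt_iff_tendsto_slope.mp ((hDF t x hx).hasDerivWithinAt)
    have hslope2 : Filter.Tendsto (slope (F t) x) (𝓝[Set.Icc 0 a \ {x}] x) (𝓝 (ψ t)) := by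
      rw [tendsto_iff_dist_tendsto_zero]
      refine squeeze_zero' (g := fun y => M * |y - x|) (Filter.Eventually.of_forall fun y => dist_nonneg) ?_ ?_
      · filter_upwards [self_mem_nhdsWithin] with y hy
        obtain ⟨hyI, hyx⟩ := hy
        have hxy : y - x ≠ 0 := sub_ne_zero.mpr hyx
        rw [Real.dist_eq, slope_def_field]
        have hrw : (F t y - F t x) / (y - x) - ψ t
            = (F t y - F t x - (y - x) * ψ t) / (y - x) := by field_simp
        rw [hrw, abs_div, div_le_iff₀ (abs_pos.mpr hxy)]
        calc |F t y - F t x - (y - x) * ψ t| ≤ M * |y - x|^2 := hclose y hyI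
          _ = M * |y - x| * |y - x| := by ring
      · have : Filter.Tendsto (fun y : ℝ => M * |y - x|) (𝓝 x) (𝓝 (M * |x - x|)) := by
          exact (continuous_const.mul (continuous_abs.comp
            (continuous_id.sub continuous_const))).tendsto x
        simpa using this.mono_left nhdsWithin_le_nhds
    exact tendsto_nhds_unique hslope1 hslope2
  -- final estimate
  have final : ∀ t : ℝ, 0 ≤ t → ∀ x ∈ Set.Icc 0 a, ∀ y ∈ Set.Icc 0 a,
      |Real.log (DF t y) - Real.log (DF t x)| ≤
        C₂ / C₁ * (Real.exp (C₁ * t) - 1) * |y - x| := by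
    intro t ht x hx y hy
    rw [hkey y hy t ht, hkey x hx t ht, Real.log_exp, Real.log_exp]
    have hFdx : Differentiable ℝ fun s => F s x := fun s => (hFt x hx s).differentiableAt
    have hFdy : Differentiable ℝ fun s => F s y := fun s => (hFt y hy s).differentiableAt
    have hFcx : Continuous fun s => F s x := hFdx.continuous
    have hFcy : Continuous fun s => F s y := hFdy.continuous
    have hcx : Continuous fun s => deriv X (F s x) := hX'c.comp hFcx
    have hcy : Continuous fun s => deriv X (F s y) := hX'c.comp hFcy
    rw [← intervalIntegral.integral_sub (hcy.intervalIntegrable 0 t) (hcx.intervalIntegrable 0 t)]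
    have hgint : IntervalIntegrable (fun s => C₂ * |y - x| * Real.exp (C₁ * s))
        MeasureTheory.volume 0 t :=
      (Continuous.intervalIntegrable
        (continuous_const.mul (Real.continuous_exp.comp (continuous_const.mul continuous_id))) 0 t)
    have hbd : ∀ s ∈ Set.uIoc (0:ℝ) t,
        ‖deriv X (F s y) - deriv X (F s x)‖ ≤ C₂ * |y - x| * Real.exp (C₁ * s) := by
      intro s hs
      rw [Set.uIoc_of_le ht] at hs
      have hs0 : (0:ℝ) ≤ s := hs.1.le
      have h1 := lipX' (F s x) (hFmaps s x hx) (F s y) (hFmaps s y hy)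
      have h2 := hA s hs0 x hx y hy
      rw [Real.norm_eq_abs]
      calc |deriv X (F s y) - deriv X (F s x)| ≤ C₂ * |F s y - F s x| := h1
        _ ≤ C₂ * (|y - x| * Real.exp (C₁ * s)) := by
            exact mul_le_mul_of_nonneg_left h2 hC2nn
        _ = C₂ * |y - x| * Real.exp (C₁ * s) := by ring
    have hmain := intervalIntegral.norm_integral_le_of_norm_le
      (f := fun s => deriv X (F s y) - deriv X (F s x))
      (g := fun s => C₂ * |y - x| * Real.exp (C₁ * s)) (μ := MeasureTheory.volume)
      ht (Filter.Eventually.of_forall fun s hs => hbd s (by rw [Set.uIoc_of_le ht]; exact hs)) hgint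
    rw [Real.norm_eq_abs] at hmain
    refine hmain.trans ?_
    have hexpint : (∫ s in (0:ℝ)..t, Real.exp (C₁ * s))
        = (Real.exp (C₁ * t) - 1) / C₁ := by
      have hanti : ∀ s : ℝ, HasDerivAt (fun r => Real.exp (C₁ * r) / C₁)
          (Real.exp (C₁ * s)) s := by
        intro s
        have h := (((hasDerivAt_id s).const_mul C₁).exp).div_const C₁
        simpa [mul_comm, mul_div_assoc, mul_div_cancel_left₀, ne_of_gt hC₁pos] using h
      rw [intervalIntegral.integral_eq_sub_of_hasDerivAt (fun s _ => hanti s)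
        ((Real.continuous_exp.comp (continuous_const.mul continuous_id)).intervalIntegrable 0 t)]
      field_simp
      simp
    rw [intervalIntegral.integral_const_mul, hexpint]
    have hub : C₂ * |y - x| * ((Real.exp (C₁ * t) - 1) / C₁)
        = C₂ / C₁ * (Real.exp (C₁ * t) - 1) * |y - x| := by ring
    have h1 : (1:ℝ) ≤ Real.exp (C₁ * t) := by
      rw [← Real.exp_zero]; exact Real.exp_le_exp.mpr (by nlinarith)
    have hnn : 0 ≤ C₂ * |y - x| * ((Real.exp (C₁ * t) - 1) / C₁) :=
      mul_nonneg (mul_nonneg hC2nn (abs_nonneg _)) (div_nonneg (by linarith) hC₁pos.le)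
    exact le_of_eq hub
  exact final
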